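/- Let r, s be positive integers and let A be a nonnegative rs×rs matrix, written as an r×r array of s×s blocks A_{ij}, which is an (r,s)-disoriented block circulant matrix: there exists an (r,s)-block circulant matrix Ã, with the same first block row as A and with blocks Ã_{ij}, such that for every i ∈ {2,…,r} either A_{ij} = Ã_{ij} for all j, or A_{ij} = J_s·Ã_{ij} for all j. Assume moreover that (Σ_{j=1}^r A_{1j})·J_s = J_s·(Σ_{j=1}^r A_{1j}). Then the spectral radius of A equals the spectral radius of Σ_{j=1}^r A_{1j}. -/

import Mathlib

open scoped ENNReal NNReal Matrix

/-- The spectral radius of a square real matrix: the maximum (supremum) of the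
moduli of its complex eigenvalues. -/
noncomputable def specRad {m : Type*} [Fintype m] [DecidableEq m]
    (M : Matrix m m ℝ) : ℝ :=
  sSup {x : ℝ | ∃ z ∈ spectrum ℂ (M.map (algebraMap ℝ ℂ)), ‖z‖ = x}

/-- The `(r,s)`-block circulant matrix with first block row `A 0, A 1, …, A (r-1)`:
the block in position `(i, j)` is `A (j - i)` (subtraction mod `r`). -/
def blockCirc (r s : ℕ) (A : Fin r → Matrix (Fin s) (Fin s) ℝ) :
    Matrix (Fin r × Fin s) (Fin r × Fin s) ℝ :=
  Matrix.of fun p q => A (q.1 - p.1) p.2 q.2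

/-- The `s × s` block in block-position `(i, j)` of an `rs × rs` matrix. -/
def blockOf (r s : ℕ) (M : Matrix (Fin r × Fin s) (Fin r × Fin s) ℝ)
    (i j : Fin r) : Matrix (Fin s) (Fin s) ℝ :=
  Matrix.of fun a b => M (i, a) (j, b)

/-- The `s × s` permutation matrix with ones on the anti-diagonal:
`(J_s)_{ij} = 1` iff `j = s + 1 - i` (one-indexed). -/
def Jmat (s : ℕ) : Matrix (Fin s) (Fin s) ℝ :=
  Matrix.of fun i j => if i.val + j.val + 1 = s then 1 else 0

attribute [local instance] Matrix.linftyOpNormedRing Matrix.linftyOpNormedAlgebra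

/-- `specRad` is the `toReal` of mathlib's `spectralRadius` of the complexification. -/
lemma specRad_eq_toReal {m : Type*} [Fintype m] [DecidableEq m] [Nonempty m]
    (M : Matrix m m ℝ) :
    specRad M = (spectralRadius ℂ (M.map (algebraMap ℝ ℂ))).toReal := by
  letI : CompleteSpace (Matrix m m ℂ) := FiniteDimensional.complete ℂ _
  set N := M.map (algebraMap ℝ ℂ) with hN
  obtain ⟨z, hz, hzr⟩ := spectrum.exists_nnnorm_eq_spectralRadius (a := N)
  have hub : ∀ x ∈ {x : ℝ | ∃ w ∈ spectrum ℂ N, ‖w‖ = x}, x ≤ ‖z‖ := by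
    rintro x ⟨w, hw, rfl⟩
    have h1 : (‖w‖₊ : ℝ≥0∞) ≤ spectralRadius ℂ N :=
      le_iSup₂ (f := fun k (_ : k ∈ spectrum ℂ N) => (‖k‖₊ : ℝ≥0∞)) w hw
    rw [← hzr, ENNReal.coe_le_coe] at h1
    exact NNReal.coe_le_coe.mpr h1
  have hgr : IsGreatest {x : ℝ | ∃ w ∈ spectrum ℂ N, ‖w‖ = x} (‖z‖) :=
    ⟨⟨z, hz, rfl⟩, hub⟩
  have h2 : specRad M = sSup {x : ℝ | ∃ w ∈ spectrum ℂ N, ‖w‖ = x} := rfl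
  rw [h2, hgr.csSup_eq, ← hzr]
  simp

/-- Gelfand: two complex matrices whose powers have equal (L∞-op) norms have the same
spectral radius. -/
lemma spectralRadius_eq_of_pow_nnnorm_eq {m k : Type*} [Fintype m] [DecidableEq m]
    [Fintype k] [DecidableEq k] (M : Matrix m m ℂ) (N : Matrix k k ℂ)
    (h : ∀ n : ℕ, 1 ≤ n → ‖M ^ n‖₊ = ‖N ^ n‖₊) :
    spectralRadius ℂ M = spectralRadius ℂ N := by
  letI : CompleteSpace (Matrix m m ℂ) := FiniteDimensional.complete ℂ _
  letI : CompleteSpace (Matrix k k ℂ) := FiniteDimensional.complete ℂ _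
  have h1 := spectrum.pow_nnnorm_pow_one_div_tendsto_nhds_spectralRadius M
  have h2 := spectrum.pow_nnnorm_pow_one_div_tendsto_nhds_spectralRadius N
  refine tendsto_nhds_unique (h1.congr' ?_) h2
  filter_upwards [Filter.eventually_ge_atTop 1] with n hn
  rw [h n hn]

lemma pow_entry_nonneg {m : Type*} [Fintype m] [DecidableEq m] (M : Matrix m m ℝ)
    (h : ∀ p q, 0 ≤ M p q) : ∀ (n : ℕ) (p q : m), 0 ≤ (M ^ (n + 1)) p q := by
  intro n
  induction n with
  | zero => simpa using h
  | succ n ih =>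
    intro p q
    rw [pow_succ, Matrix.mul_apply]
    exact Finset.sum_nonneg fun c _ => mul_nonneg (ih p c) (h c q)

lemma Jmat_mulVec_one (s : ℕ) : Jmat s *ᵥ (fun _ => (1 : ℝ)) = fun _ => 1 := by
  funext a
  have ha := a.isLt
  simp only [Matrix.mulVec, dotProduct, Jmat, Matrix.of_apply, mul_one]
  rw [Finset.sum_eq_single (⟨s - 1 - a.val, by omega⟩ : Fin s)]
  · rw [if_pos]
    show a.val + (s - 1 - a.val) + 1 = s
    omega
  · intro b _ hb
    rw [if_neg]
    intro hc
    apply hb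
    apply Fin.ext
    show b.val = s - 1 - a.val
    omega
  · intro hmem
    exact absurd (Finset.mem_univ _) hmem

theorem stmt3 (r s : ℕ) (hr : 0 < r) (hs : 0 < s)
    (A : Matrix (Fin r × Fin s) (Fin r × Fin s) ℝ)
    (hA : ∀ p q, 0 ≤ A p q)
    -- `A` is an `(r,s)`-disoriented block circulant matrix: the block circulant
    -- matrix `Ã` built from the first block row of `A` is such that every block
    -- row of `A` equals the corresponding block row of `Ã`, or is obtained from
    -- it by pre-multiplying each block by `J_s`:
    (hdis : ∀ i : Fin r, i ≠ ⟨0, hr⟩ →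
      (∀ j, blockOf r s A i j =
        blockOf r s (blockCirc r s (blockOf r s A ⟨0, hr⟩)) i j) ∨
      (∀ j, blockOf r s A i j =
        Jmat s * blockOf r s (blockCirc r s (blockOf r s A ⟨0, hr⟩)) i j))
    (hcomm : (∑ j, blockOf r s A ⟨0, hr⟩ j) * Jmat s
        = Jmat s * (∑ j, blockOf r s A ⟨0, hr⟩ j)) :
    specRad A = specRad (∑ j, blockOf r s A ⟨0, hr⟩ j) := by
  haveI : NeZero r := ⟨hr.ne'⟩
  haveI : NeZero s := ⟨hs.ne'⟩
  haveI : Nonempty (Fin r) := ⟨⟨0, hr⟩⟩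
  haveI : Nonempty (Fin s) := ⟨⟨0, hs⟩⟩
  set i0 : Fin r := ⟨0, hr⟩ with hi0
  set B : Matrix (Fin s) (Fin s) ℝ := ∑ j, blockOf r s A i0 j with hBdef
  -- block row sums of A are B or J * B
  have hcircsum : ∀ i : Fin r,
      (∑ j, blockOf r s (blockCirc r s (blockOf r s A i0)) i j) = B := by
    intro i
    have h1 : ∀ j, blockOf r s (blockCirc r s (blockOf r s A i0)) i j
        = blockOf r s A i0 (j - i) := fun j => rfl
    rw [Finset.sum_congr rfl fun j _ => h1 j]
    exact Fintype.sum_equiv (Equiv.subRight i) _ _ fun _ => rfl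
  have hrow : ∀ i : Fin r, (∑ j, blockOf r s A i j) = B ∨
      (∑ j, blockOf r s A i j) = Jmat s * B := by
    intro i
    by_cases hi : i = i0
    · subst hi; exact Or.inl rfl
    · rcases hdis i hi with h | h
      · left
        rw [Finset.sum_congr rfl fun j _ => h j, hcircsum i]
      · right
        rw [Finset.sum_congr rfl fun j _ => h j, ← Finset.mul_sum, hcircsum i]
  have hcomm' : B * Jmat s = Jmat s * B := hcomm
  have hcommpow : ∀ n : ℕ, Jmat s * B ^ n = B ^ n * Jmat s := by
    intro n
    have hc : Commute (Jmat s) B := hcomm'.symm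
    exact Commute.pow_right hc n
  -- key step: A acting on "constant-in-blocks" J-invariant vectors
  have hstep : ∀ y : Fin s → ℝ, Jmat s *ᵥ y = y →
      (A *ᵥ (fun p : Fin r × Fin s => y p.2)) = fun p => (B *ᵥ y) p.2 := by
    intro y hy
    funext p
    obtain ⟨i, a⟩ := p
    have h1 : (A *ᵥ (fun p : Fin r × Fin s => y p.2)) (i, a)
        = ((∑ j, blockOf r s A i j) *ᵥ y) a := by
      simp only [Matrix.mulVec, dotProduct, Fintype.sum_prod_type,
        Finset.sum_apply, Matrix.sum_apply, Finset.sum_mul]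
      rw [Finset.sum_comm]
      rfl
    rw [h1]
    rcases hrow i with h2 | h2
    · rw [h2]
    · rw [h2]
      have h7 : (Jmat s * B) *ᵥ y = B *ᵥ y := by
        rw [← hcomm', ← Matrix.mulVec_mulVec, hy]
      rw [h7]
  -- J-invariance of B^n *ᵥ 1
  have hJone : Jmat s *ᵥ (fun _ => (1 : ℝ)) = fun _ => 1 := Jmat_mulVec_one s
  have hJinv : ∀ n : ℕ, Jmat s *ᵥ (B ^ n *ᵥ (fun _ => (1 : ℝ))) = B ^ n *ᵥ (fun _ => 1) := by
    intro n
    rw [Matrix.mulVec_mulVec, hcommpow n, ← Matrix.mulVec_mulVec, hJone]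
  -- main computation : row sums of A^(n+1) equal row sums of B^(n+1)
  have hmain : ∀ n : ℕ, A ^ (n + 1) *ᵥ (fun _ => (1 : ℝ))
      = fun p : Fin r × Fin s => (B ^ (n + 1) *ᵥ (fun _ => 1)) p.2 := by
    intro n
    induction n with
    | zero =>
      rw [pow_one, pow_one]
      exact hstep _ hJone
    | succ n ih =>
      rw [pow_succ' A (n + 1), ← Matrix.mulVec_mulVec, ih,
        hstep _ (hJinv (n + 1)), pow_succ' B (n + 1), ← Matrix.mulVec_mulVec]
  have hrs : ∀ (n : ℕ) (p : Fin r × Fin s),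
      ∑ q, (A ^ (n + 1)) p q = ∑ b, (B ^ (n + 1)) p.2 b := by
    intro n p
    have := congrFun (hmain n) p
    simpa [Matrix.mulVec, dotProduct] using this
  -- nonnegativity
  have hBnn : ∀ a b, 0 ≤ B a b := by
    intro a b
    rw [hBdef]
    simp only [Matrix.sum_apply]
    exact Finset.sum_nonneg fun j _ => hA (i0, a) (j, b)
  have hApow := pow_entry_nonneg A hA
  have hBpow := pow_entry_nonneg B hBnn
  -- norm equality for powers of complexifications
  have hnorm : ∀ n : ℕ, 1 ≤ n →
      ‖(A.map (algebraMap ℝ ℂ)) ^ n‖₊ = ‖(B.map (algebraMap ℝ ℂ)) ^ n‖₊ := by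
    intro n hn
    obtain ⟨m, rfl⟩ := Nat.exists_eq_add_of_le hn
    have hmapA : (A.map (algebraMap ℝ ℂ)) ^ (1 + m) = (A ^ (1 + m)).map (algebraMap ℝ ℂ) := by
      rw [← RingHom.mapMatrix_apply, ← RingHom.mapMatrix_apply, map_pow]
    have hmapB : (B.map (algebraMap ℝ ℂ)) ^ (1 + m) = (B ^ (1 + m)).map (algebraMap ℝ ℂ) := by
      rw [← RingHom.mapMatrix_apply, ← RingHom.mapMatrix_apply, map_pow]
    have hone : 1 + m = m + 1 := by omega
    rw [hone] at hmapA hmapB ⊢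
    rw [hmapA, hmapB]
    have hkey : ∀ p : Fin r × Fin s,
        (∑ q, ‖((A ^ (m + 1)).map (algebraMap ℝ ℂ)) p q‖₊)
          = ∑ b, ‖((B ^ (m + 1)).map (algebraMap ℝ ℂ)) p.2 b‖₊ := by
      intro p
      apply NNReal.coe_injective
      rw [NNReal.coe_sum, NNReal.coe_sum]
      have h5 : ∀ q, ((‖((A ^ (m + 1)).map (algebraMap ℝ ℂ)) p q‖₊ : ℝ))
          = (A ^ (m + 1)) p q := by
        intro q
        rw [coe_nnnorm]
        simp only [Matrix.map_apply, Complex.coe_algebraMap, Complex.norm_real]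
        exact Real.norm_of_nonneg (hApow m p q)
      have h6 : ∀ b, ((‖((B ^ (m + 1)).map (algebraMap ℝ ℂ)) p.2 b‖₊ : ℝ))
          = (B ^ (m + 1)) p.2 b := by
        intro b
        rw [coe_nnnorm]
        simp only [Matrix.map_apply, Complex.coe_algebraMap, Complex.norm_real]
        exact Real.norm_of_nonneg (hBpow m p.2 b)
      rw [Finset.sum_congr rfl fun q _ => h5 q, Finset.sum_congr rfl fun b _ => h6 b]
      exact hrs m p
    rw [Matrix.linfty_opNNNorm_def, Matrix.linfty_opNNNorm_def]
    refine le_antisymm (Finset.sup_le fun p _ => ?_) (Finset.sup_le fun a _ => ?_)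
    · exact (hkey p).le.trans (Finset.le_sup
        (f := fun a : Fin s => ∑ b, ‖((B ^ (m + 1)).map (algebraMap ℝ ℂ)) a b‖₊)
        (Finset.mem_univ p.2))
    · exact (hkey (i0, a)).symm.le.trans (Finset.le_sup
        (f := fun p : Fin r × Fin s => ∑ q, ‖((A ^ (m + 1)).map (algebraMap ℝ ℂ)) p q‖₊)
        (Finset.mem_univ (i0, a)))
  rw [specRad_eq_toReal A, specRad_eq_toReal B]
  congr 1
  exact spectralRadius_eq_of_pow_nnnorm_eq _ _ hnorm
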